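/- Let x = X^ζ w̃ ∈ W be of positive level. If the positive double affine root α = ν + rδ + jπ (with ν ∈ Φ_fin, r, j ∈ ℤ) is a corner of the lower graph Γ_{x,fin(α)}, then one of the following holds: j = 0, or j = 1, or j = −⟨ζ, ν + rδ⟩, or j = −⟨ζ, ν + rδ⟩ − 1. -/

import Mathlib

/-!
Common framework for the double affine Weyl semigroup of Welch,
"Double Affine Bruhat Order".

Encoding conventions:
* `P` is the finite weight lattice `P_fin` (an additive abelian group) equipped with
  an integer-valued pairing `pair` (the normalized simply-laced pairing, identifying
  roots and coroots).
* A finite root is an element of the set `Φfin ⊆ P`; `finPos` is the set of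
  positive finite roots.
* An affine root `ν + rδ` is encoded as the pair `(ν, r) : P × ℤ`.
* An affine weight `ζ = μ + mδ + lΛ₀ ∈ X` is encoded as `(μ, m, l) : P × ℤ × ℤ`.
* A double affine root `ν + rδ + jπ` is encoded as `(ν, r, j) : P × ℤ × ℤ`.
* `G` is the affine Weyl group `W_aff` (an abstract group), acting on affine
  roots via `ract` and on `X` via `xact`; `saff α̃` is the reflection `s_{α̃}`,
  `Ytr λ` is the translation `Y^λ`.
* An element `X^ζ w̃` of the group `X ⋊ W_aff` (in particular of the double affine
  Weyl semigroup `W`, whose elements are those with `ζ` in the Tits cone) is encoded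
  as the pair `(ζ, w̃) : (P × ℤ × ℤ) × G`.
-/

namespace DoubleAffineBruhat

/-- Positivity of an affine root `ν + rδ`, encoded as the pair `(ν, r)`:
`ν + rδ > 0` iff `r > 0`, or `r = 0` and `ν` is a positive finite root. -/
def aPos {P : Type} (finPos : Set P) (a : P × ℤ) : Prop :=
  0 < a.2 ∨ (a.2 = 0 ∧ a.1 ∈ finPos)

/-- The pairing of an affine weight `ζ = μ + mδ + lΛ₀`, encoded as `(μ, m, l)`,
with an affine root `ν + rδ`, encoded as `(ν, r)`:
`⟨ζ, ν + rδ⟩ = ⟨μ, ν⟩ + l·r`. -/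
def xpair {P : Type} (pair : P → P → ℤ) (ζ : P × ℤ × ℤ) (a : P × ℤ) : ℤ :=
  pair ζ.1 a.1 + ζ.2.2 * a.2

/-- The level of an affine weight. -/
def level {P : Type} (ζ : P × ℤ × ℤ) : ℤ := ζ.2.2

/-- The Tits cone `𝒯 = {mδ : m ∈ ℤ} ∪ {μ + mδ + lΛ₀ : l > 0}`. -/
def Tits (P : Type) [AddCommGroup P] : Set (P × ℤ × ℤ) :=
  {ζ | (ζ.1 = 0 ∧ ζ.2.2 = 0) ∨ 0 < ζ.2.2}

/-- Positivity of a double affine root `α = α̃ + jπ` encoded as `(ν, r, j)`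
(with `α̃ = ν + rδ`): positive iff (`α̃ > 0` and `j ≥ 0`) or (`α̃ < 0` and `j > 0`). -/
def dPos {P : Type} [AddCommGroup P] (finPos : Set P) (a : P × ℤ × ℤ) : Prop :=
  (aPos finPos (a.1, a.2.1) ∧ 0 ≤ a.2.2) ∨ (aPos finPos (-a.1, -a.2.1) ∧ 0 < a.2.2)

variable {P G : Type} [AddCommGroup P] [Group G]

/-- Multiplication in the group `X ⋊ W_aff`:
`(X^ζ g)(X^η h) = X^{ζ + gη} (gh)`, where `xact` is the action of `W_aff` on `X`. -/
def dwmul (xact : G → P × ℤ × ℤ → P × ℤ × ℤ) (x y : (P × ℤ × ℤ) × G) :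
    (P × ℤ × ℤ) × G :=
  (x.1 + xact x.2 y.1, x.2 * y.2)

/-- Inversion in the group `X ⋊ W_aff`: `(X^ζ g)⁻¹ = X^{-g⁻¹ζ} g⁻¹`. -/
def dwinv (xact : G → P × ℤ × ℤ → P × ℤ × ℤ) (x : (P × ℤ × ℤ) × G) :
    (P × ℤ × ℤ) × G :=
  (-(xact x.2⁻¹ x.1), x.2⁻¹)

/-- Action of `X^ζ g ∈ X ⋊ W_aff` on double affine roots:
`X^ζ g (α̃ + jπ) = g(α̃) + (j - ⟨ζ, g(α̃)⟩)π`, where `ract` is the action of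
`W_aff` on affine roots. -/
def dact (pair : P → P → ℤ) (ract : G → P × ℤ → P × ℤ)
    (x : (P × ℤ × ℤ) × G) (a : P × ℤ × ℤ) : P × ℤ × ℤ :=
  ((ract x.2 (a.1, a.2.1)).1, (ract x.2 (a.1, a.2.1)).2,
    a.2.2 - xpair pair x.1 (ract x.2 (a.1, a.2.1)))

/-- The reflection `s_α = X^{-j(ν + rδ)} s_{ν + rδ} ∈ X ⋊ W_aff` associated to the
double affine root `α = ν + rδ + jπ`. -/
def dref (saff : P × ℤ → G) (a : P × ℤ × ℤ) : (P × ℤ × ℤ) × G :=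
  ((-a.2.2 • a.1, -(a.2.2 * a.2.1), 0), saff (a.1, a.2.1))

/-- All the data of the double affine setting together with the structural facts
that hold in it (context facts; `Φ_fin` irreducible and simply laced, normalized
pairing, Coxeter facts for `W_aff`, etc.). -/
structure Ctx (P G : Type) [AddCommGroup P] [Group G] where
  /-- the normalized pairing on the finite weight lattice -/
  pair : P → P → ℤ
  /-- the set of finite roots `Φ_fin` -/
  Φfin : Set P
  /-- the set of positive finite roots -/
  finPos : Set P
  /-- the number of finite simple roots (the affine simple roots are `α_0, …, α_n`) -/
  n : ℕ
  /-- the affine simple roots `α_0, …, α_n` -/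
  simple : Fin (n + 1) → P × ℤ
  /-- the action of `W_aff` on affine roots -/
  ract : G → P × ℤ → P × ℤ
  /-- the action of `W_aff` on the affine weight lattice `X` -/
  xact : G → P × ℤ × ℤ → P × ℤ × ℤ
  /-- the reflection `s_{α̃} ∈ W_aff` of an affine root `α̃` -/
  saff : P × ℤ → G
  /-- the translation `Y^λ ∈ W_aff` -/
  Ytr : P → G
  /-- the linear functional `⟨·, 2ρ⟩`, `ρ` the sum of the affine fundamental weights;
  an affine root `ν + rδ` is paired as the weight `(ν, r, 0)` -/
  rho2 : P × ℤ × ℤ → ℤ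
  /-- `ζ ↦ ζ₊`, the dominant representative of the `W_aff`-orbit of `ζ` (for `ζ ∈ 𝒯`) -/
  domRep : P × ℤ × ℤ → P × ℤ × ℤ
  pair_add_left : ∀ μ ν γ, pair (μ + ν) γ = pair μ γ + pair ν γ
  pair_add_right : ∀ μ ν γ, pair μ (ν + γ) = pair μ ν + pair μ γ
  pair_symm : ∀ μ ν, pair μ ν = pair ν μ
  pair_norm : ∀ ν ∈ Φfin, pair ν ν = 2
  pair_bound : ∀ ν ∈ Φfin, ∀ γ ∈ Φfin, pair ν γ ≤ 2
  pair_two_eq : ∀ ν ∈ Φfin, ∀ γ ∈ Φfin, pair ν γ = 2 → ν = γ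
  root_neg : ∀ ν ∈ Φfin, -ν ∈ Φfin
  pos_trichotomy : ∀ ν ∈ Φfin, (ν ∈ finPos ↔ ¬(-ν ∈ finPos))
  simple_root : ∀ i, (simple i).1 ∈ Φfin
  simple_pos : ∀ i, aPos finPos (simple i)
  ract_one : ∀ a, ract 1 a = a
  ract_mul : ∀ g h a, ract (g * h) a = ract g (ract h a)
  ract_neg : ∀ g a, ract g (-a) = -(ract g a)
  ract_root : ∀ g (a : P × ℤ), a.1 ∈ Φfin → (ract g a).1 ∈ Φfin
  xact_one : ∀ ζ, xact 1 ζ = ζ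
  xact_mul : ∀ g h ζ, xact (g * h) ζ = xact g (xact h ζ)
  xact_add : ∀ g ζ η, xact g (ζ + η) = xact g ζ + xact g η
  xact_level : ∀ g ζ, (xact g ζ).2.2 = ζ.2.2
  xact_pair : ∀ g ζ a, xpair pair (xact g ζ) (ract g a) = xpair pair ζ a
  saff_act : ∀ (ν : P) (r : ℤ) (γ : P) (p : ℤ),
    ract (saff (ν, r)) (γ, p) = (γ - pair ν γ • ν, p - r * pair ν γ)
  saff_invol : ∀ a : P × ℤ, saff a * saff a = 1
  saff_neg : ∀ a : P × ℤ, saff (-a) = saff a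
  Ytr_act : ∀ (lam ν : P) (r : ℤ), ract (Ytr lam) (ν, r) = (ν, r - pair lam ν)
  decomp : ∀ g : G, ∃ (lam : P) (wf : G), g = Ytr lam * wf ∧
    ∀ (ν : P) (r : ℤ), ract wf (ν, r) = ((ract wf (ν, 0)).1, r)
  invFin : ∀ g : G,
    {a : P × ℤ | a.1 ∈ Φfin ∧ aPos finPos a ∧ aPos finPos (-(ract g a))}.Finite
  domRep_mem : ∀ ζ : P × ℤ × ℤ, ζ ∈ Tits P → ∃ g : G, xact g ζ = domRep ζ
  domRep_dom : ∀ ζ : P × ℤ × ℤ, ζ ∈ Tits P → ∀ i, 0 ≤ xpair pair (domRep ζ) (simple i)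
  domRep_eq : ∀ ζ : P × ℤ × ℤ, ζ ∈ Tits P →
    ∀ g : G, (∀ i, 0 ≤ xpair pair (xact g ζ) (simple i)) → xact g ζ = domRep ζ
  rho2_add : ∀ ζ η, rho2 (ζ + η) = rho2 ζ + rho2 η
  rho2_simple : ∀ i, rho2 ((simple i).1, (simple i).2, 0) = 2

/-- The inversion set `Inv(g) = {α̃ ∈ Φ_aff : α̃ > 0, g(α̃) < 0}`. -/
def InvA (C : Ctx P G) (g : G) : Set (P × ℤ) :=
  {a | a.1 ∈ C.Φfin ∧ aPos C.finPos a ∧ aPos C.finPos (-(C.ract g a))}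

/-- The Coxeter length of `g ∈ W_aff`, via `ℓ(g) = |Inv(g)|`. -/
noncomputable def alen (C : Ctx P G) (g : G) : ℤ := ((InvA C g).ncard : ℤ)

/-- `ζ ∈ X` is dominant: `⟨ζ, α_i⟩ ≥ 0` for all affine simple roots. -/
def dominant (C : Ctx P G) (ζ : P × ℤ × ℤ) : Prop :=
  ∀ i, 0 ≤ xpair C.pair ζ (C.simple i)

/-- `ζ ∈ X` is regular: `⟨ζ, α̃⟩ ≠ 0` for all affine roots `α̃`. -/
def regular (C : Ctx P G) (ζ : P × ℤ × ℤ) : Prop :=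
  ∀ a : P × ℤ, a.1 ∈ C.Φfin → xpair C.pair ζ a ≠ 0

/-- The length of `x = X^ζ w̃ ∈ W`:
`ℓ(x) = ⟨ζ₊, 2ρ⟩ + #{α̃ ∈ Inv(w̃⁻¹) : ⟨ζ, α̃⟩ ≤ 0} - #{α̃ ∈ Inv(w̃⁻¹) : ⟨ζ, α̃⟩ > 0}`. -/
noncomputable def dlen (C : Ctx P G) (x : (P × ℤ × ℤ) × G) : ℤ :=
  C.rho2 (C.domRep x.1)
    + ((InvA C x.2⁻¹ ∩ {a | xpair C.pair x.1 a ≤ 0}).ncard : ℤ)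
    - ((InvA C x.2⁻¹ ∩ {a | 0 < xpair C.pair x.1 a}).ncard : ℤ)

/-- One generating step of the double affine Bruhat order:
`bstep C x y` holds iff `x` has positive level and `y = s_α x` for some positive
double affine root `α` with `x⁻¹(α) < 0`. -/
def bstep (C : Ctx P G) (x y : (P × ℤ × ℤ) × G) : Prop :=
  0 < level x.1 ∧ ∃ a : P × ℤ × ℤ, a.1 ∈ C.Φfin ∧ dPos C.finPos a ∧
    dPos C.finPos (-(dact C.pair C.ract (dwinv C.xact x) a)) ∧
    y = dwmul C.xact (dref C.saff a) x

/-- `bge C x y` means `x ≥ y` in the double affine Bruhat order (the order generated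
by the relations `s_α x < x`). -/
def bge (C : Ctx P G) (x y : (P × ℤ × ℤ) × G) : Prop :=
  Relation.ReflTransGen (bstep C) x y

/-- `blt C y x` means `y < x` in the double affine Bruhat order. -/
def blt (C : Ctx P G) (y x : (P × ℤ × ℤ) × G) : Prop :=
  bge C x y ∧ y ≠ x

/-- `y` is a cocover of `x`: `y < x` and there is no `z` with `y < z < x`. -/
def cocover (C : Ctx P G) (y x : (P × ℤ × ℤ) × G) : Prop :=
  blt C y x ∧ ¬∃ z : (P × ℤ × ℤ) × G, blt C y z ∧ blt C z x

/-- A double affine root `b` "corresponds to a point of the lower graph of `x`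
(corresponding to `fin b`)": `b > 0` and `x⁻¹(b) < 0`. -/
def inGraph (C : Ctx P G) (x : (P × ℤ × ℤ) × G) (b : P × ℤ × ℤ) : Prop :=
  dPos C.finPos b ∧ dPos C.finPos (-(dact C.pair C.ract (dwinv C.xact x) b))

/-- The lower graph `Γ_{x,ν} = {(r,j) : ν + rδ + jπ > 0 and x⁻¹(ν + rδ + jπ) < 0}`. -/
def Gamma (C : Ctx P G) (x : (P × ℤ × ℤ) × G) (ν : P) : Set (ℤ × ℤ) :=
  {rj | inGraph C x (ν, rj.1, rj.2)}

/-- `a` is a corner of the lower graph `Γ_{x, fin(a)}`. -/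
def IsCorner (C : Ctx P G) (x : (P × ℤ × ℤ) × G) (a : P × ℤ × ℤ) : Prop :=
  inGraph C x a ∧
    ∀ b : P × ℤ × ℤ, b.1 = a.1 → b ≠ a → inGraph C x b →
      ¬ inGraph C x (-(dact C.pair C.ract (dref C.saff a) b))

/-- The length difference set
`L_{x,α} = {β ∈ Φ : β > 0, x⁻¹(β) < 0, s_α(β) < 0, x⁻¹ s_α(β) > 0}`. -/
def Ldiff (C : Ctx P G) (x : (P × ℤ × ℤ) × G) (a : P × ℤ × ℤ) :
    Set (P × ℤ × ℤ) :=
  {b | b.1 ∈ C.Φfin ∧ dPos C.finPos b ∧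
    dPos C.finPos (-(dact C.pair C.ract (dwinv C.xact x) b)) ∧
    dPos C.finPos (-(dact C.pair C.ract (dref C.saff a) b)) ∧
    dPos C.finPos (dact C.pair C.ract (dwinv C.xact x) (dact C.pair C.ract (dref C.saff a) b))}

lemma pair_zero_left (C : Ctx P G) (γ : P) : C.pair 0 γ = 0 := by
  have := C.pair_add_left 0 0 γ; simpa using this

lemma pair_neg_left (C : Ctx P G) (μ γ : P) : C.pair (-μ) γ = -C.pair μ γ := by
  have := C.pair_add_left (-μ) μ γ
  simp [pair_zero_left] at this
  omega

lemma pair_zsmul_left (C : Ctx P G) (z : ℤ) (μ γ : P) :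
    C.pair (z • μ) γ = z * C.pair μ γ := by
  induction z using Int.induction_on with
  | zero => simpa using pair_zero_left C γ
  | succ n ih =>
      rw [add_smul, one_smul, C.pair_add_left, ih]; ring
  | pred n ih =>
      rw [sub_smul, one_smul, sub_eq_add_neg, C.pair_add_left, pair_neg_left, ih]
      ring

lemma xpair_neg (C : Ctx P G) (η : P × ℤ × ℤ) (a : P × ℤ) :
    xpair C.pair (-η) a = -(xpair C.pair η a) := by
  simp [xpair, pair_neg_left]; ring

theorem statement4' (C : Ctx P G)
    (ζ : P × ℤ × ℤ) (g : G)
    (x : (P × ℤ × ℤ) × G) (hx : x = (ζ, g))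
    (hxW : ζ ∈ Tits P) (hxl : 0 < level ζ)
    (ν : P) (r j : ℤ) (hν : ν ∈ C.Φfin)
    (hpos : dPos C.finPos (ν, r, j))
    (hcorner : IsCorner C x (ν, r, j)) :
    j = 0 ∨ j = 1 ∨ j = -(xpair C.pair ζ (ν, r)) ∨ j = -(xpair C.pair ζ (ν, r)) - 1 := by
  by_contra hcon
  push_neg at hcon
  obtain ⟨h0, h1, hc, hc1⟩ := hcon
  subst hx
  -- computation of x⁻¹ acting on ν + rδ + kπ
  have hA : ∀ k : ℤ, dact C.pair C.ract (dwinv C.xact ((ζ, g) : (P × ℤ × ℤ) × G)) (ν, r, k)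
      = ((C.ract g⁻¹ (ν, r)).1, (C.ract g⁻¹ (ν, r)).2, k + xpair C.pair ζ (ν, r)) := by
    intro k
    show ((C.ract g⁻¹ (ν, r)).1, (C.ract g⁻¹ (ν, r)).2,
      k - xpair C.pair (-(C.xact g⁻¹ ζ)) (C.ract g⁻¹ (ν, r))) = _
    rw [xpair_neg, C.xact_pair, sub_neg_eq_add]
  -- computation of s_α acting on ν + rδ + kπ
  have hB : ∀ k : ℤ, dact C.pair C.ract (dref C.saff ((ν, r, j) : P × ℤ × ℤ)) (ν, r, k)
      = (-ν, -r, k - 2 * j) := by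
    intro k
    show ((C.ract (C.saff (ν, r)) (ν, r)).1, (C.ract (C.saff (ν, r)) (ν, r)).2,
      k - xpair C.pair (-j • ν, -(j * r), 0) (C.ract (C.saff (ν, r)) (ν, r))) = _
    rw [C.saff_act, C.pair_norm ν hν]
    have h2 : ν - (2:ℤ) • ν = -ν := by rw [two_smul]; abel
    rw [h2]
    have hp2 : C.pair ((-j) • ν) (-ν) = 2 * j := by
      rw [pair_zsmul_left, C.pair_symm, pair_neg_left, C.pair_symm, C.pair_norm ν hν]; ring
    simp only [xpair, hp2, Prod.mk.injEq]
    refine ⟨trivial, by ring, by ring⟩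
  obtain ⟨hα, hcor⟩ := hcorner
  obtain ⟨hαp, hαn⟩ := hα
  rw [hA] at hαn
  -- positivity of (ν, r, j ± 1)
  have hposk : ∀ k : ℤ, 1 ≤ k → dPos C.finPos ((ν, r, k) : P × ℤ × ℤ) := by
    intro k hk
    rcases hpos with ⟨hp1, _⟩ | ⟨hp1, _⟩
    · exact Or.inl ⟨hp1, by show (0:ℤ) ≤ k; omega⟩
    · exact Or.inr ⟨hp1, by show (0:ℤ) < k; omega⟩
  have hj2 : 2 ≤ j := by
    rcases hpos with ⟨_, hp2⟩ | ⟨_, hp2⟩ <;> simp at hp2 <;> omega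
  -- the value j + c is ≤ -2
  have hjc : j + xpair C.pair ζ (ν, r) ≤ -2 := by
    rcases hαn with ⟨_, hp2⟩ | ⟨_, hp2⟩ <;> simp at hp2 <;> omega
  have hnegk : ∀ k : ℤ, k + xpair C.pair ζ (ν, r) ≤ -1 →
      dPos C.finPos (-(((C.ract g⁻¹ (ν, r)).1, (C.ract g⁻¹ (ν, r)).2,
        k + xpair C.pair ζ (ν, r)) : P × ℤ × ℤ)) := by
    intro k hk
    rcases hαn with ⟨hp1, _⟩ | ⟨hp1, _⟩
    · exact Or.inl ⟨hp1, by simp; omega⟩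
    · exact Or.inr ⟨by simpa using hp1, by simp; omega⟩
  have hg1 : inGraph C ((ζ, g) : (P × ℤ × ℤ) × G) (ν, r, j - 1) := by
    refine ⟨hposk (j - 1) (by omega), ?_⟩
    rw [hA]
    exact hnegk (j - 1) (by omega)
  have hg2 : inGraph C ((ζ, g) : (P × ℤ × ℤ) × G) (ν, r, j + 1) := by
    refine ⟨hposk (j + 1) (by omega), ?_⟩
    rw [hA]
    exact hnegk (j + 1) (by omega)
  have key := hcor (ν, r, j - 1) rfl (by simp) hg1
  rw [hB] at key
  apply key
  have : -((-ν, -r, j - 1 - 2 * j) : P × ℤ × ℤ) = (ν, r, j + 1) := by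
    simp only [Prod.neg_mk, neg_neg, Prod.mk.injEq]
    refine ⟨trivial, trivial, by ring⟩
  rw [this]
  exact hg2

/-- Corollary `corner types`: a corner `α = ν + rδ + jπ` of the lower
graph `Γ_{x, fin(α)}` has `j ∈ {0, 1, -⟨ζ, ν + rδ⟩, -⟨ζ, ν + rδ⟩ - 1}`. -/
theorem statement4 {P G : Type} [AddCommGroup P] [Group G] (C : Ctx P G)
    (ζ : P × ℤ × ℤ) (g : G)
    (x : (P × ℤ × ℤ) × G) (hx : x = (ζ, g))
    (hxW : ζ ∈ Tits P) (hxl : 0 < level ζ)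
    (ν : P) (r j : ℤ) (hν : ν ∈ C.Φfin)
    (hpos : dPos C.finPos (ν, r, j))
    (hcorner : IsCorner C x (ν, r, j)) :
    j = 0 ∨ j = 1 ∨ j = -(xpair C.pair ζ (ν, r)) ∨ j = -(xpair C.pair ζ (ν, r)) - 1 :=
  statement4' C ζ g x hx hxW hxl ν r j hν hpos hcorner

end DoubleAffineBruhat
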